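/- For t ≥ 3, any partition λ in DS(t) of largest size satisfies 2t−1 ∈ MD(λ), and moreover 1, 3, and 2t−3 are not in MD(λ). -/

import Mathlib

/-- An integer partition, given by its (weakly decreasing, eventually zero)
sequence of parts, indexed from `0`. -/
structure IntPartition where
  parts : ℕ → ℕ
  antitone : ∀ i j, i ≤ j → parts j ≤ parts i
  finite : ∃ N, ∀ i, N ≤ i → parts i = 0

namespace IntPartition

/-- The size of a partition: the sum of its parts. -/
noncomputable def size (lam : IntPartition) : ℕ := ∑ᶠ i, lam.parts i

/-- The parts of the conjugate partition: `conjParts lam j` is the number of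
rows `i` with `lam.parts i > j` (rows and columns are `0`-indexed). -/
noncomputable def conjParts (lam : IntPartition) (j : ℕ) : ℕ :=
  Nat.card {i : ℕ | j < lam.parts i}

/-- A partition is self-conjugate if it equals its conjugate. -/
def IsSelfConjugate (lam : IntPartition) : Prop :=
  ∀ j, lam.conjParts j = lam.parts j

/-- `(i, j)` (both `0`-indexed) is a cell of the Young diagram of `lam`. -/
def IsCell (lam : IntPartition) (i j : ℕ) : Prop := j < lam.parts i

/-- The hook length of the cell `(i, j)` (both `0`-indexed): the number of
cells directly to the right, plus the number directly below, plus one. -/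
noncomputable def hook (lam : IntPartition) (i j : ℕ) : ℕ :=
  (lam.parts i - j) + (lam.conjParts j - i) - 1

/-- A partition is a `t`-core if no hook length is divisible by `t`. -/
def IsCore (lam : IntPartition) (t : ℕ) : Prop :=
  ∀ i j, lam.IsCell i j → ¬ (t ∣ lam.hook i j)

/-- The size of the Durfee square: the largest `k` such that the partition has
at least `k` parts of size at least `k`. -/
noncomputable def durfee (lam : IntPartition) : ℕ :=
  Nat.card {i : ℕ | i < lam.parts i}

/-- A partition has distinct parts if its (nonzero) parts are pairwise different. -/
def DistinctParts (lam : IntPartition) : Prop :=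
  ∀ i j, lam.parts i ≠ 0 → lam.parts j ≠ 0 → i ≠ j → lam.parts i ≠ lam.parts j

/-- The set of main diagonal hook lengths of `lam`. -/
noncomputable def MD (lam : IntPartition) : Set ℕ :=
  {h | ∃ i < lam.durfee, lam.hook i i = h}

/-- `lam ∈ DS(t)`: `lam` is a self-conjugate `(t, t+1)`-core partition whose
first `durfee lam` parts are pairwise distinct. -/
def InDS (lam : IntPartition) (t : ℕ) : Prop :=
  lam.IsSelfConjugate ∧ lam.IsCore t ∧ lam.IsCore (t + 1) ∧
    ∀ i j, i < lam.durfee → j < lam.durfee → i ≠ j → lam.parts i ≠ lam.parts j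

end IntPartition

namespace PfAux

open Finset

lemma nat_eq_of_lt_iff {c c' : ℕ} (h : ∀ i, i < c ↔ i < c') : c = c' := by
  have h1 := h c; have h2 := h c'; omega

lemma step_monoC (c : ℕ) (f : ℕ → ℕ) (n : ℕ)
    (hstep : ∀ i, i + 1 < n → f (i + 1) + c ≤ f i) :
    ∀ k i, i + k < n → f (i + k) + c * k ≤ f i := by
  intro k
  induction k with
  | zero => intro i _; simp
  | succ p ih =>
      intro i h
      have h1 := hstep (i + p) (by omega)
      have h2 := ih i (by omega)
      have he : i + (p + 1) = (i + p) + 1 := by omega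
      rw [he]
      have hc : c * (p + 1) = c * p + c := by ring
      omega

lemma lower_finset_eq_range (F : Finset ℕ)
    (h : ∀ a b : ℕ, a ≤ b → b ∈ F → a ∈ F) : F = Finset.range F.card := by
  have hne : ∃ n, n ∉ F := ⟨F.sup id + 1, fun hmem => by
    have := Finset.le_sup (f := id) hmem
    simp only [id] at this
    omega⟩
  have hnotin : Nat.find hne ∉ F := Nat.find_spec hne
  have hlt : ∀ k, k < Nat.find hne → k ∈ F := fun k hk =>
    not_not.mp (Nat.find_min hne hk)
  have hFeq : F = Finset.range (Nat.find hne) := by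
    ext k
    simp only [Finset.mem_range]
    exact ⟨fun hk => by by_contra h'; push_neg at h'; exact hnotin (h _ k h' hk), hlt k⟩
  rw [hFeq, Finset.card_range]

lemma lower_set_mem_iff {S : Set ℕ} (hfin : S.Finite)
    (hlow : ∀ a b : ℕ, a ≤ b → b ∈ S → a ∈ S) (i : ℕ) : i ∈ S ↔ i < Nat.card S := by
  classical
  have hF := lower_finset_eq_range hfin.toFinset (fun a b hab hb => by
    rw [Set.Finite.mem_toFinset] at *
    exact hlow a b hab hb)
  have hcard : Nat.card S = hfin.toFinset.card := Nat.card_eq_card_finite_toFinset hfin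
  rw [hcard, ← Finset.mem_range, ← hF, Set.Finite.mem_toFinset]

end PfAux

namespace IntPartition

open PfAux

variable (lam : IntPartition)

lemma mem_conj_iff (j i : ℕ) : i < lam.conjParts j ↔ j < lam.parts i := by
  obtain ⟨N0, hN0⟩ := lam.finite
  have hfin : {i : ℕ | j < lam.parts i}.Finite := by
    apply Set.Finite.subset (Set.finite_Iio N0)
    intro k hk
    simp only [Set.mem_setOf_eq] at hk
    simp only [Set.mem_Iio]
    by_contra h'
    push_neg at h'
    rw [hN0 k h'] at hk
    omega
  have := lower_set_mem_iff hfin (fun a b hab hb => by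
    simp only [Set.mem_setOf_eq] at *
    have := lam.antitone a b hab
    omega) i
  exact (by simpa [IntPartition.conjParts] using this.symm)

lemma mem_durfee_iff (i : ℕ) : i < lam.durfee ↔ i < lam.parts i := by
  obtain ⟨N0, hN0⟩ := lam.finite
  have hfin : {i : ℕ | i < lam.parts i}.Finite := by
    apply Set.Finite.subset (Set.finite_Iio N0)
    intro k hk
    simp only [Set.mem_setOf_eq] at hk
    simp only [Set.mem_Iio]
    by_contra h'
    push_neg at h'
    rw [hN0 k h'] at hk
    omega
  have := lower_set_mem_iff hfin (fun a b hab hb => by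
    simp only [Set.mem_setOf_eq] at *
    have := lam.antitone a b hab
    omega) i
  exact (by simpa [IntPartition.durfee] using this.symm)

lemma conj_le_conj_zero (j : ℕ) : lam.conjParts j ≤ lam.conjParts 0 := by
  by_contra h
  push_neg at h
  have h1 := (lam.mem_conj_iff j (lam.conjParts 0)).mp h
  have h2 := (lam.mem_conj_iff 0 (lam.conjParts 0)).mpr (by omega)
  omega

lemma conj_succ_le (j : ℕ) : lam.conjParts (j+1) ≤ lam.conjParts j := by
  by_contra h
  push_neg at h
  have h1 := (lam.mem_conj_iff (j+1) (lam.conjParts j)).mp h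
  have h2 := (lam.mem_conj_iff j (lam.conjParts j)).mpr (by omega)
  omega

end IntPartition
namespace PfAux

/-- beta number of row `i` (with `N = conjParts 0` rows). -/
noncomputable def bN (lam : IntPartition) (i : ℕ) : ℕ :=
  lam.parts i + (lam.conjParts 0 - 1 - i)

/-- "column beta number" of column `j`. -/
noncomputable def cN (lam : IntPartition) (j : ℕ) : ℕ :=
  lam.conjParts 0 - lam.conjParts j + j

variable (lam : IntPartition)

lemma bN_eq {i : ℕ} (hi : i < lam.conjParts 0) :
    bN lam i + i + 1 = lam.parts i + lam.conjParts 0 := by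
  unfold bN; omega

lemma cN_eq (j : ℕ) : cN lam j + lam.conjParts j = lam.conjParts 0 + j := by
  have := lam.conj_le_conj_zero j
  unfold cN; omega

lemma cell_lt_N {i j : ℕ} (hc : lam.IsCell i j) : i < lam.conjParts 0 :=
  (lam.mem_conj_iff 0 i).mpr (by exact lt_of_le_of_lt (Nat.zero_le j) hc)

lemma hook_add_cN {i j : ℕ} (hc : lam.IsCell i j) :
    lam.hook i j + cN lam j = bN lam i ∧ 1 ≤ lam.hook i j := by
  have h1 : j < lam.parts i := hc
  have h2 : i < lam.conjParts j := (lam.mem_conj_iff j i).mpr h1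
  have h3 := lam.conj_le_conj_zero j
  have h4 : i < lam.conjParts 0 := cell_lt_N lam hc
  have h5 : lam.hook i j = (lam.parts i - j) + (lam.conjParts j - i) - 1 := rfl
  unfold bN cN
  omega

lemma bN_ne_cN {i : ℕ} (hi : i < lam.conjParts 0) (j : ℕ) : bN lam i ≠ cN lam j := by
  by_cases hc : j < lam.parts i
  · have := hook_add_cN lam (i := i) (j := j) hc
    omega
  · have h2 : ¬ (i < lam.conjParts j) := fun h => hc ((lam.mem_conj_iff j i).mp h)
    have h3 := lam.conj_le_conj_zero j
    unfold bN cN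
    omega

lemma cover (v : ℕ) : (∃ i < lam.conjParts 0, bN lam i = v) ∨ (∃ j, cN lam j = v) := by
  by_contra hcon
  push_neg at hcon
  obtain ⟨h1, h2⟩ := hcon
  have hc0 : cN lam 0 = 0 := by unfold cN; omega
  have hv1 : 1 ≤ v := by
    rcases Nat.eq_zero_or_pos v with h | h
    · exact absurd (h ▸ hc0) (h2 0)
    · exact h
  have hgrow : ∀ j, j ≤ cN lam j := by
    intro j
    induction j with
    | zero => omega
    | succ p ih =>
        have e1 := cN_eq lam p
        have e2 := cN_eq lam (p+1)
        have e3 := lam.conj_succ_le p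
        omega
  have hex : ∃ n, v ≤ cN lam n := ⟨v, hgrow v⟩
  set n := Nat.find hex with hn
  have hnge : v ≤ cN lam n := Nat.find_spec hex
  have hnpos : 1 ≤ n := by
    rcases Nat.eq_zero_or_pos n with h | h
    · rw [h] at hnge; omega
    · exact h
  set j := n - 1 with hj
  have hjlt : ¬ v ≤ cN lam j := Nat.find_min hex (by omega)
  have hsucc : j + 1 = n := by omega
  have hnge' : v ≤ cN lam (j+1) := by rw [hsucc]; exact hnge
  have hne : cN lam (j+1) ≠ v := h2 (j+1)
  have e1 := cN_eq lam j
  have e2 := cN_eq lam (j+1)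
  have e3 := lam.conj_succ_le j
  have e4 := lam.conj_le_conj_zero j
  -- i := conjParts j - (v - cN lam j)
  set i := lam.conjParts j - (v - cN lam j) with hi
  have hilt : i < lam.conjParts j := by omega
  have hige : lam.conjParts (j+1) ≤ i := by omega
  have hp1 : j < lam.parts i := (lam.mem_conj_iff j i).mp hilt
  have hp2 : ¬ (j + 1 < lam.parts i) := fun h =>
    (by omega : ¬ i < lam.conjParts (j+1)) ((lam.mem_conj_iff (j+1) i).mpr h)
  have hpi : lam.parts i = j + 1 := by omega
  have hiN : i < lam.conjParts 0 := by omega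
  have hbeq := bN_eq lam hiN
  exact (h1 i hiN) (by omega)

lemma core_closure {t : ℕ} (hcore : lam.IsCore t) :
    ∀ i, i < lam.conjParts 0 → t ≤ bN lam i →
      ∃ i', i' < lam.conjParts 0 ∧ bN lam i' + t = bN lam i := by
  intro i hiN hti
  rcases cover lam (bN lam i - t) with ⟨i', hi', hb⟩ | ⟨j, hcj⟩
  · exact ⟨i', hi', by omega⟩
  · exfalso
    have hcell : lam.IsCell i j := by
      by_contra hc
      have h2 : ¬ (i < lam.conjParts j) := fun h => hc ((lam.mem_conj_iff j i).mp h)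
      have h3 := lam.conj_le_conj_zero j
      have h4 : lam.parts i ≤ j := by
        by_contra h'
        exact hc (by exact Nat.lt_of_not_le h')
      have : bN lam i < cN lam j := by unfold bN cN; omega
      omega
    obtain ⟨heq, hpos⟩ := hook_add_cN lam hcell
    have : lam.hook i j = t := by omega
    exact hcore i j hcell (this ▸ dvd_refl t)

lemma closure_core {t : ℕ} (ht : 1 ≤ t)
    (hcl : ∀ i, i < lam.conjParts 0 → t ≤ bN lam i →
      ∃ i', i' < lam.conjParts 0 ∧ bN lam i' + t = bN lam i) :
    lam.IsCore t := by
  intro i j hcell hdvd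
  obtain ⟨heq, hpos⟩ := hook_add_cN lam hcell
  obtain ⟨c, hc⟩ := hdvd
  have hc1 : 1 ≤ c := by
    rcases Nat.eq_zero_or_pos c with h | h
    · rw [h, Nat.mul_zero] at hc; omega
    · exact h
  have hiN := cell_lt_N lam hcell
  have claim : ∀ k, k ≤ c → ∃ i', i' < lam.conjParts 0 ∧ bN lam i' + t * k = bN lam i := by
    intro k
    induction k with
    | zero => intro _; exact ⟨i, hiN, by omega⟩
    | succ p ih =>
        intro hpc
        obtain ⟨i', hi'N, hi'⟩ := ih (by omega)
        have hmul : t * (p + 1) ≤ t * c := Nat.mul_le_mul_left t hpc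
        have hmul2 : t * (p+1) = t * p + t := by ring
        have hbig : t ≤ bN lam i' := by omega
        obtain ⟨i'', hi''N, hi''⟩ := hcl i' hi'N hbig
        exact ⟨i'', hi''N, by omega⟩
  obtain ⟨i'', hi''N, hi''⟩ := claim c le_rfl
  have : bN lam i'' = cN lam j := by omega
  exact bN_ne_cN lam hi''N j this

end PfAux
namespace PfAux

open Finset

variable (lam : IntPartition)

lemma diag_hook (hsc : lam.IsSelfConjugate) {i : ℕ} (hi : i < lam.durfee) :
    lam.IsCell i i ∧ lam.hook i i + 2 * i + 1 = 2 * lam.parts i := by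
  have h1 : i < lam.parts i := (lam.mem_durfee_iff i).mp hi
  have h2 : lam.conjParts i = lam.parts i := hsc i
  have h3 : lam.hook i i = (lam.parts i - i) + (lam.conjParts i - i) - 1 := rfl
  exact ⟨h1, by omega⟩

lemma offdiag_hook (hsc : lam.IsSelfConjugate) {i j : ℕ}
    (hi : i < lam.durfee) (hj : j < lam.durfee) :
    lam.IsCell i j ∧ 2 * lam.hook i j + 2 * i + 2 * j + 2 = 2 * lam.parts i + 2 * lam.parts j := by
  have h1 : i < lam.parts i := (lam.mem_durfee_iff i).mp hi
  have h2 : j < lam.parts j := (lam.mem_durfee_iff j).mp hj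
  have h3 : lam.conjParts j = lam.parts j := hsc j
  have hcell : j < lam.parts i := by
    rcases Nat.le_total j i with h | h
    · omega
    · have := lam.antitone i j h; omega
  have hcell2 : i < lam.parts j := by
    rcases Nat.le_total i j with h | h
    · omega
    · have := lam.antitone j i h; omega
  have h4 : lam.hook i j = (lam.parts i - j) + (lam.conjParts j - i) - 1 := rfl
  exact ⟨hcell, by omega⟩

lemma parts_strict (hdist : ∀ i j, i < lam.durfee → j < lam.durfee → i ≠ j →
    lam.parts i ≠ lam.parts j) :
    ∀ i, i + 1 < lam.durfee → lam.parts (i+1) + 1 ≤ lam.parts i := by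
  intro i hi
  have h1 := lam.antitone i (i+1) (by omega)
  have h2 := hdist i (i+1) (by omega) hi (by omega)
  omega

/-- `aλ i = parts i - i` decreases by at least 2 along the diagonal (for DS partitions). -/
lemma a_step (hdist : ∀ i j, i < lam.durfee → j < lam.durfee → i ≠ j →
    lam.parts i ≠ lam.parts j) :
    ∀ i, i + 1 < lam.durfee → (lam.parts (i+1) - (i+1)) + 2 ≤ lam.parts i - i := by
  intro i hi
  have h1 := parts_strict lam hdist i hi
  have h2 : i + 1 < lam.parts (i+1) := (lam.mem_durfee_iff (i+1)).mp hi
  omega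

lemma a_mono (hdist : ∀ i j, i < lam.durfee → j < lam.durfee → i ≠ j →
    lam.parts i ≠ lam.parts j) :
    ∀ i j, i ≤ j → j < lam.durfee →
      (lam.parts j - j) + 2 * (j - i) ≤ lam.parts i - i := by
  intro i j hij hj
  have := step_monoC 2 (fun k => lam.parts k - k) lam.durfee (a_step lam hdist) (j - i) i
    (by omega)
  have he : i + (j - i) = j := by omega
  rw [he] at this
  exact this

/-- Size of a self-conjugate partition equals the sum of its diagonal hook lengths. -/
lemma size_eq (hsc : lam.IsSelfConjugate) :
    lam.size = ∑ i ∈ Finset.range lam.durfee, (2 * lam.parts i - 2 * i - 1) := by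
  classical
  obtain ⟨N0, hN0⟩ := lam.finite
  set d := lam.durfee with hd
  set M := N0 + d + lam.conjParts 0 with hM
  have hdM : d ≤ M := by omega
  have hNM : lam.conjParts 0 ≤ M := by omega
  have hsupp : Function.support lam.parts ⊆ ↑(Finset.range M) := by
    intro i hi
    simp only [Function.mem_support] at hi
    simp only [Finset.coe_range, Set.mem_Iio]
    by_contra h'
    push_neg at h'
    exact hi (hN0 i (by omega))
  have h1 : lam.size = ∑ i ∈ Finset.range M, lam.parts i :=
    finsum_eq_sum_of_support_subset _ hsupp
  have h2 : ∀ i, lam.parts i = (lam.parts i - i) + min (lam.parts i) i := by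
    intro i; omega
  rw [h1]
  have h3 : ∑ i ∈ Finset.range M, lam.parts i =
      (∑ i ∈ Finset.range M, (lam.parts i - i)) +
      (∑ i ∈ Finset.range M, min (lam.parts i) i) := by
    rw [← Finset.sum_add_distrib]
    exact Finset.sum_congr rfl (fun i _ => h2 i)
  rw [h3]
  -- Part A
  have hA : ∑ i ∈ Finset.range M, (lam.parts i - i) =
      ∑ i ∈ Finset.range d, (lam.parts i - i) := by
    symm
    apply Finset.sum_subset (Finset.range_subset_range.mpr hdM)
    intro i _ hid
    simp only [Finset.mem_range] at hid
    have : ¬ i < lam.parts i := fun h => hid ((lam.mem_durfee_iff i).mpr h)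
    omega
  -- Part B
  have hBfilter : ∀ i, min (lam.parts i) i =
      ((Finset.range M).filter (fun j => j < lam.parts i ∧ j < i)).card := by
    intro i
    have : (Finset.range M).filter (fun j => j < lam.parts i ∧ j < i) =
        Finset.range (min (lam.parts i) i) := by
      ext j
      simp only [Finset.mem_filter, Finset.mem_range]
      constructor
      · intro h; omega
      · intro h
        have hjM : j < M := by
          have h4 : i < M ∨ M ≤ i := by omega
          rcases h4 with h4 | h4
          · omega
          · have := hN0 i (by omega); omega
        omega
    rw [this, Finset.card_range]
  have hB : ∑ i ∈ Finset.range M, min (lam.parts i) i =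
      ∑ j ∈ Finset.range M, (lam.conjParts j - (j+1)) := by
    have hswap : ∑ i ∈ Finset.range M, min (lam.parts i) i =
        ∑ j ∈ Finset.range M, ∑ i ∈ Finset.range M,
          (if j < lam.parts i ∧ j < i then 1 else 0) := by
      rw [Finset.sum_comm]
      apply Finset.sum_congr rfl
      intro i _
      rw [hBfilter i, Finset.card_filter]
    rw [hswap]
    apply Finset.sum_congr rfl
    intro j _
    have : ∑ i ∈ Finset.range M, (if j < lam.parts i ∧ j < i then 1 else 0) =
        ((Finset.range M).filter (fun i => j < lam.parts i ∧ j < i)).card := by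
      rw [Finset.card_filter]
    rw [this]
    have hset : (Finset.range M).filter (fun i => j < lam.parts i ∧ j < i) =
        Finset.Ico (j+1) (lam.conjParts j) := by
      ext i
      simp only [Finset.mem_filter, Finset.mem_range, Finset.mem_Ico]
      constructor
      · intro ⟨_, hp, hij⟩
        exact ⟨by omega, (lam.mem_conj_iff j i).mpr hp⟩
      · intro ⟨hj1, hcj⟩
        have hp := (lam.mem_conj_iff j i).mp hcj
        have : i < lam.conjParts 0 := by
          have := lam.conj_le_conj_zero j; omega
        exact ⟨by omega, hp, by omega⟩
    rw [hset, Nat.card_Ico]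
  have hB2 : ∑ j ∈ Finset.range M, (lam.conjParts j - (j+1)) =
      ∑ j ∈ Finset.range d, (lam.parts j - j - 1) := by
    have hstep1 : ∑ j ∈ Finset.range M, (lam.conjParts j - (j+1)) =
        ∑ j ∈ Finset.range d, (lam.conjParts j - (j+1)) := by
      symm
      apply Finset.sum_subset (Finset.range_subset_range.mpr hdM)
      intro j _ hjd
      simp only [Finset.mem_range] at hjd
      rw [hsc j]
      have : ¬ j < lam.parts j := fun hh => hjd ((lam.mem_durfee_iff j).mpr hh)
      omega
    rw [hstep1]
    apply Finset.sum_congr rfl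
    intro j hj
    rw [hsc j]
    omega
  rw [hA, hB, hB2, ← Finset.sum_add_distrib]
  apply Finset.sum_congr rfl
  intro i hi
  simp only [Finset.mem_range] at hi
  have : i < lam.parts i := (lam.mem_durfee_iff i).mp hi
  omega

end PfAux
namespace PfAux

variable (lam : IntPartition)

lemma parts_zero_le {t : ℕ} (hsc : lam.IsSelfConjugate)
    (hct : lam.IsCore t) (hct1 : lam.IsCore (t+1))
    (hdist : ∀ i j, i < lam.durfee → j < lam.durfee → i ≠ j →
      lam.parts i ≠ lam.parts j)
    (ht : 3 ≤ t) : lam.parts 0 ≤ t := by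
  by_contra hcon
  push_neg at hcon
  have hN : lam.conjParts 0 = lam.parts 0 := hsc 0
  have h0N : 0 < lam.conjParts 0 := by omega
  have hd0 : 0 < lam.durfee := (lam.mem_durfee_iff 0).mpr (by omega)
  have hb0 := bN_eq lam h0N
  -- bN 0 = 2 * parts 0 - 1
  obtain ⟨i₁, hi₁N, hb1⟩ := core_closure lam hct 0 h0N (by omega)
  obtain ⟨i₂, hi₂N, hb2⟩ := core_closure lam hct1 0 h0N (by omega)
  have he1 := bN_eq lam hi₁N
  have he2 := bN_eq lam hi₂N
  have hi₁d : i₁ < lam.durfee := (lam.mem_durfee_iff i₁).mpr (by omega)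
  obtain ⟨hcell1, hk1⟩ := diag_hook lam hsc hi₁d
  have hi₁0 : i₁ ≠ 0 := by
    intro h
    rw [h] at hb1
    omega
  by_cases hP : t + 2 ≤ lam.parts 0
  · -- two close diagonal hooks, contradiction with gap ≥ 4
    have hi₂d : i₂ < lam.durfee := (lam.mem_durfee_iff i₂).mpr (by omega)
    obtain ⟨hcell2, hk2⟩ := diag_hook lam hsc hi₂d
    have hne : i₁ ≠ i₂ := by
      intro h
      rw [h] at hb1
      omega
    rcases Nat.lt_or_ge i₁ i₂ with h | h
    · have := a_mono lam hdist i₁ i₂ (by omega) hi₂d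
      have d1 : i₁ < lam.parts i₁ := (lam.mem_durfee_iff i₁).mp hi₁d
      have d2 : i₂ < lam.parts i₂ := (lam.mem_durfee_iff i₂).mp hi₂d
      omega
    · have hlt : i₂ < i₁ := by omega
      have := a_mono lam hdist i₂ i₁ (by omega) hi₁d
      have d1 : i₁ < lam.parts i₁ := (lam.mem_durfee_iff i₁).mp hi₁d
      have d2 : i₂ < lam.parts i₂ := (lam.mem_durfee_iff i₂).mp hi₂d
      omega
  · -- parts 0 = t + 1 : then hook i₁ i₁ = 1 and hook 0 i₁ = t + 1
    have hPe : lam.parts 0 = t + 1 := by omega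
    obtain ⟨hcello, hko⟩ := offdiag_hook lam hsc hd0 hi₁d
    have : lam.hook 0 i₁ = t + 1 := by omega
    exact hct1 0 i₁ hcello (this ▸ dvd_refl (t+1))

end PfAux
namespace PfAux

open Finset

/-- Parts of the self-conjugate partition with diagonal data `a 0 > a 1 > ... > a (m-1)`
(the diagonal hooks are `2 * a i - 1`). -/
def buildParts (m : ℕ) (a : ℕ → ℕ) (i : ℕ) : ℕ :=
  if i < m then a i + i else ((Finset.range m).filter (fun j => i < a j + j)).card

section Build

variable (m : ℕ) (a : ℕ → ℕ)
variable (hstep : ∀ i, i + 1 < m → a (i+1) + 2 ≤ a i)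
variable (hpos : ∀ i, i < m → 1 ≤ a i)

include hstep in
lemma build_q_mono : ∀ i j, i ≤ j → j < m → a j + j + (j - i) ≤ a i + i := by
  intro i j hij hj
  have := step_monoC 1 (fun k => a k + k) m
    (fun i hi => by have := hstep i hi; beta_reduce; omega) (j - i) i (by omega)
  have he : i + (j - i) = j := by omega
  rw [he] at this
  have this2 : a j + j + 1 * (j - i) ≤ a i + i := this
  omega

lemma buildParts_ge {i : ℕ} (hi : m ≤ i) :
    buildParts m a i = ((Finset.range m).filter (fun j => i < a j + j)).card := by
  unfold buildParts
  rw [if_neg (by omega)]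

lemma buildParts_lt {i : ℕ} (hi : i < m) : buildParts m a i = a i + i := by
  unfold buildParts
  rw [if_pos hi]

lemma buildParts_ge_le {i : ℕ} (hi : m ≤ i) : buildParts m a i ≤ m := by
  rw [buildParts_ge m a hi]
  exact le_trans (Finset.card_filter_le _ _) (by rw [Finset.card_range])

include hstep hpos in
lemma build_swap : ∀ i j, (j < buildParts m a i ↔ i < buildParts m a j) := by
  have hlow : ∀ v : ℕ, ∀ a' b' : ℕ, a' ≤ b' →
      b' ∈ (Finset.range m).filter (fun j => v < a j + j) →
      a' ∈ (Finset.range m).filter (fun j => v < a j + j) := by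
    intro v a' b' hab hb
    simp only [Finset.mem_filter, Finset.mem_range] at *
    obtain ⟨hbm, hbv⟩ := hb
    have := build_q_mono m a hstep a' b' hab hbm
    exact ⟨by omega, by omega⟩
  have hmemcard : ∀ v i : ℕ, i < m →
      (i ∈ (Finset.range m).filter (fun j => v < a j + j) ↔
        i < ((Finset.range m).filter (fun j => v < a j + j)).card) := by
    intro v i him
    constructor
    · intro h
      have heq := lower_finset_eq_range _ (hlow v)
      rw [heq] at h
      simpa using h
    · intro h
      have heq := lower_finset_eq_range _ (hlow v)
      rw [heq]
      simpa using h
  intro i j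
  by_cases hi : i < m <;> by_cases hj : j < m
  · rw [buildParts_lt m a hi, buildParts_lt m a hj]
    rcases lt_trichotomy i j with h | h | h
    · have h1 := build_q_mono m a hstep i j (by omega) hj
      have h2 := hpos j hj
      constructor <;> intro <;> omega
    · rw [h]
    · have h1 := build_q_mono m a hstep j i (by omega) hi
      have h2 := hpos i hi
      constructor <;> intro <;> omega
  · -- i < m ≤ j
    rw [buildParts_lt m a hi, buildParts_ge m a (by omega)]
    have := hmemcard j i hi
    simp only [Finset.mem_filter, Finset.mem_range] at this
    constructor
    · intro h; exact this.mp ⟨hi, h⟩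
    · intro h; exact (this.mpr h).2
  · -- j < m ≤ i
    rw [buildParts_ge m a (by omega), buildParts_lt m a hj]
    have := hmemcard i j hj
    simp only [Finset.mem_filter, Finset.mem_range] at this
    constructor
    · intro h; exact (this.mpr h).2
    · intro h; exact this.mp ⟨hj, h⟩
  · have h1 : buildParts m a i ≤ m := buildParts_ge_le m a (by omega)
    have h2 : buildParts m a j ≤ m := buildParts_ge_le m a (by omega)
    constructor <;> intro <;> omega

include hstep hpos in
lemma build_antitone : ∀ i j, i ≤ j → buildParts m a j ≤ buildParts m a i := by
  intro i j hij
  by_cases hj : j < m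
  · have hi : i < m := by omega
    rw [buildParts_lt m a hi, buildParts_lt m a hj]
    have := build_q_mono m a hstep i j hij hj
    omega
  · by_cases hi : i < m
    · rw [buildParts_lt m a hi]
      have h1 : buildParts m a j ≤ m := buildParts_ge_le m a (by omega)
      have h2 := build_q_mono m a hstep i (m-1) (by omega) (by omega)
      have h3 := hpos (m-1) (by omega)
      omega
    · rw [buildParts_ge m a (by omega), buildParts_ge m a (by omega)]
      apply Finset.card_le_card
      intro k hk
      simp only [Finset.mem_filter, Finset.mem_range] at *
      exact ⟨hk.1, by omega⟩

include hstep in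
lemma build_finite : ∀ i, a 0 + m ≤ i → buildParts m a i = 0 := by
  intro i hi
  rcases Nat.eq_zero_or_pos m with hm | hm
  · rw [buildParts_ge m a (by omega), hm]
    simp
  · rw [buildParts_ge m a (by omega)]
    rw [Finset.card_eq_zero]
    apply Finset.filter_false_of_mem
    intro j hj
    simp only [Finset.mem_range] at hj
    have := build_q_mono m a hstep 0 j (by omega) hj
    omega

/-- The self-conjugate partition with diagonal entries `a i + i`. -/
def build : IntPartition where
  parts := buildParts m a
  antitone := fun i j hij => build_antitone m a hstep hpos i j hij
  finite := ⟨a 0 + m, build_finite m a hstep⟩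

include hstep hpos in
lemma build_parts_eq : (build m a hstep hpos).parts = buildParts m a := rfl

include hstep hpos in
lemma build_conj : ∀ j, (build m a hstep hpos).conjParts j = buildParts m a j := by
  intro j
  apply nat_eq_of_lt_iff
  intro i
  have h1 := (build m a hstep hpos).mem_conj_iff j i
  have h2 := build_swap m a hstep hpos i j
  constructor
  · intro h
    exact h2.mp (h1.mp h)
  · intro h
    exact h1.mpr (h2.mpr h)

include hstep hpos in
lemma build_selfconj : (build m a hstep hpos).IsSelfConjugate := by
  intro j
  exact build_conj m a hstep hpos j

include hstep hpos in
lemma build_durfee : (build m a hstep hpos).durfee = m := by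
  apply nat_eq_of_lt_iff
  intro i
  rw [(build m a hstep hpos).mem_durfee_iff i]
  show i < buildParts m a i ↔ i < m
  constructor
  · intro h
    by_contra h'
    push_neg at h'
    have := buildParts_ge_le m a h'
    omega
  · intro h
    rw [buildParts_lt m a h]
    have := hpos i h
    omega

end Build

end PfAux
namespace PfAux

open Finset

section BuildDS

variable (m : ℕ) (a : ℕ → ℕ)
variable (hstep : ∀ i, i + 1 < m → a (i+1) + 2 ≤ a i)
variable (hpos : ∀ i, i < m → 1 ≤ a i)
variable (t : ℕ) (ht : 3 ≤ t) (hm : 1 ≤ m) (ha0 : a 0 = t)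
variable (hsum : ∀ i j, i < m → j < m → a i + a j ≠ t + 1 ∧ a i + a j ≠ t + 2)

include hstep hpos hm ha0 in
lemma build_N : (build m a hstep hpos).conjParts 0 = t := by
  rw [build_conj m a hstep hpos 0, buildParts_lt m a (by omega), ha0]
  omega



include hstep hpos hm ha0 in
lemma build_m_le : m ≤ t := by
  have h1 := build_q_mono m a hstep 0 (m-1) (by omega) (by omega)
  have h2 := hpos (m-1) (by omega)
  omega

include hstep hpos hm ha0 in
lemma build_a_le : ∀ i, i < m → a i + i ≤ t := by
  intro i hi
  have h1 := build_q_mono m a hstep 0 i (by omega) hi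
  omega

include hstep hpos hm ha0 hsum ht in
lemma build_core : (build m a hstep hpos).IsCore t ∧ (build m a hstep hpos).IsCore (t+1) := by
  set mu := build m a hstep hpos with hmu
  have hN : mu.conjParts 0 = t := build_N m a hstep hpos t hm ha0
  have hmt : m ≤ t := build_m_le m a hstep hpos t hm ha0
  have hparts : ∀ i, mu.parts i = buildParts m a i := fun _ => rfl
  -- closure for t and t+1
  have hclos : ∀ (s : ℕ), s = t ∨ s = t + 1 →
      (∀ i, i < mu.conjParts 0 → s ≤ bN mu i →
        ∃ i', i' < mu.conjParts 0 ∧ bN mu i' + s = bN mu i) := by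
    intro s hs i hiN hsi
    have hbe := bN_eq mu hiN
    have him : i < m := by
      by_contra h'
      push_neg at h'
      have h1 : mu.parts i ≤ m := by
        rw [hparts]
        exact buildParts_ge_le m a h'
      omega
    have hplt : mu.parts i = a i + i := by
      rw [hparts]
      exact buildParts_lt m a him
    have hai : 1 ≤ a i := hpos i him
    have haile : a i + i ≤ t := build_a_le m a hstep hpos t hm ha0 i him
    rcases hs with h | h <;> subst h
    · -- subtracting t
      rcases cover mu (a i - 1) with ⟨i', hi'N, hb⟩ | ⟨j, hcj⟩
      · exact ⟨i', hi'N, by omega⟩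
      · exfalso
        have hce := cN_eq mu j
        have hconv : mu.conjParts j = buildParts m a j := build_conj m a hstep hpos j
        by_cases hjm : j < m
        · have hbj : buildParts m a j = a j + j := buildParts_lt m a hjm
          have hsum' := (hsum i j him hjm).1
          omega
        · have hbj : buildParts m a j ≤ m := buildParts_ge_le m a (by omega)
          omega
    · -- subtracting t + 1
      rcases cover mu (a i - 2) with ⟨i', hi'N, hb⟩ | ⟨j, hcj⟩
      · exact ⟨i', hi'N, by omega⟩
      · exfalso
        have hce := cN_eq mu j
        have hconv : mu.conjParts j = buildParts m a j := build_conj m a hstep hpos j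
        by_cases hjm : j < m
        · have hbj : buildParts m a j = a j + j := buildParts_lt m a hjm
          have hsum' := (hsum i j him hjm).2
          omega
        · have hbj : buildParts m a j ≤ m := buildParts_ge_le m a (by omega)
          omega
  constructor
  · exact closure_core mu (by omega) (hclos t (Or.inl rfl))
  · exact closure_core mu (by omega) (hclos (t+1) (Or.inr rfl))

include hstep hpos hm ha0 hsum ht in
lemma build_inDS : (build m a hstep hpos).InDS t := by
  obtain ⟨hc1, hc2⟩ := build_core m a hstep hpos t ht hm ha0 hsum
  refine ⟨build_selfconj m a hstep hpos, hc1, hc2, ?_⟩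
  intro i j hi hj hij
  rw [build_durfee m a hstep hpos] at hi hj
  show buildParts m a i ≠ buildParts m a j
  rw [buildParts_lt m a hi, buildParts_lt m a hj]
  rcases Nat.lt_or_ge i j with h | h
  · have := build_q_mono m a hstep i j (by omega) hj
    omega
  · have hji : j < i := by omega
    have := build_q_mono m a hstep j i (by omega) hi
    omega

include hstep hpos hm ha0 in
lemma build_size :
    (build m a hstep hpos).size = ∑ i ∈ Finset.range m, (2 * a i - 1) := by
  rw [size_eq _ (build_selfconj m a hstep hpos), build_durfee m a hstep hpos]
  apply Finset.sum_congr rfl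
  intro i hi
  simp only [Finset.mem_range] at hi
  have h1 : (build m a hstep hpos).parts i = a i + i := buildParts_lt m a hi
  have h2 := hpos i hi
  rw [h1]
  omega

end BuildDS

end PfAux

open PfAux Finset in
/-- For `t ≥ 3`, any partition of largest size in `DS(t)` has `2t-1` as a main
diagonal hook length, and `1`, `3`, `2t-3` are not main diagonal hook lengths. -/
theorem md_of_largest_inDS (t : ℕ) (ht : 3 ≤ t) (lam : IntPartition)
    (hlam : lam.InDS t)
    (hmax : ∀ mu : IntPartition, mu.InDS t → mu.size ≤ lam.size) :
    2 * t - 1 ∈ lam.MD ∧ 1 ∉ lam.MD ∧ 3 ∉ lam.MD ∧ 2 * t - 3 ∉ lam.MD := by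
  obtain ⟨hsc, hct, hct1, hdist⟩ := hlam
  set d := lam.durfee with hd
  -- no two (not nec. distinct) diagonal entries aL i + aL j can sum to t+1 or t+2
  have hMDsum : ∀ i j, i < d → j < d →
      (lam.parts i - i) + (lam.parts j - j) ≠ t + 1 ∧
      (lam.parts i - i) + (lam.parts j - j) ≠ t + 2 := by
    intro i j hi hj
    have hpi := (lam.mem_durfee_iff i).mp hi
    have hpj := (lam.mem_durfee_iff j).mp hj
    by_cases hij : i = j
    · subst hij
      obtain ⟨hc, hk⟩ := diag_hook lam hsc hi
      constructor
      · intro h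
        have heq : lam.hook i i = t := by omega
        exact hct i i hc (heq ▸ dvd_refl t)
      · intro h
        have heq : lam.hook i i = t + 1 := by omega
        exact hct1 i i hc (heq ▸ dvd_refl (t+1))
    · obtain ⟨hc, hk⟩ := offdiag_hook lam hsc hi hj
      have hdi := (diag_hook lam hsc hi).2
      have hdj := (diag_hook lam hsc hj).2
      constructor
      · intro h
        have heq : lam.hook i j = t := by omega
        exact hct i j hc (heq ▸ dvd_refl t)
      · intro h
        have heq : lam.hook i j = t + 1 := by omega
        exact hct1 i j hc (heq ▸ dvd_refl (t+1))
  have haLpos : ∀ i, i < d → 1 ≤ lam.parts i - i := by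
    intro i hi
    have := (lam.mem_durfee_iff i).mp hi
    omega
  have hkey : 2 * t - 1 ∈ lam.MD := by
    by_contra hnot
    have hP0 : lam.parts 0 ≤ t := parts_zero_le lam hsc hct hct1 hdist ht
    have haL0 : 0 < d → lam.parts 0 - 0 ≤ t - 1 := by
      intro hd0
      obtain ⟨hc0, hk0⟩ := diag_hook lam hsc hd0
      have hne : lam.hook 0 0 ≠ 2*t - 1 := fun h => hnot ⟨0, hd0, h⟩
      have := (lam.mem_durfee_iff 0).mp hd0
      omega
    -- start and end indices of the retained block
    set s : ℕ := if 0 < d ∧ lam.parts 0 - 0 = t - 1 then 1 else 0 with hsdef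
    set e : ℕ := if s < d ∧ lam.parts (d-1) - (d-1) ≤ 2 then d - 1 else d with hedef
    have hs01 : (s = 1 ∧ 0 < d ∧ lam.parts 0 - 0 = t - 1) ∨
        (s = 0 ∧ ¬(0 < d ∧ lam.parts 0 - 0 = t - 1)) := by
      by_cases h : 0 < d ∧ lam.parts 0 - 0 = t - 1
      · left; exact ⟨by rw [hsdef, if_pos h], h⟩
      · right; exact ⟨by rw [hsdef, if_neg h], h⟩
    have he01 : (e = d - 1 ∧ s < d ∧ lam.parts (d-1) - (d-1) ≤ 2) ∨
        (e = d ∧ ¬(s < d ∧ lam.parts (d-1) - (d-1) ≤ 2)) := by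
      by_cases h : s < d ∧ lam.parts (d-1) - (d-1) ≤ 2
      · left; exact ⟨by rw [hedef, if_pos h], h⟩
      · right; exact ⟨by rw [hedef, if_neg h], h⟩
    have hse : s ≤ e ∧ e ≤ d := by
      rcases hs01 with ⟨h1, h2, _⟩ | ⟨h1, _⟩ <;> rcases he01 with ⟨h3, h4, _⟩ | ⟨h3, _⟩ <;> omega
    -- the retained diagonal entries are at least 3
    have hmid : ∀ i, s ≤ i → i < e → 3 ≤ lam.parts i - i := by
      intro i hsi hie
      have hid : i < d := by omega
      have hsd : s < d := by omega
      rcases he01 with ⟨h1, h2, h3⟩ | ⟨h1, h2⟩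
      · have hi1 : i ≤ d - 1 := by omega
        have := a_mono lam hdist i (d-1) (by omega) (by omega)
        have := haLpos (d-1) (by omega)
        omega
      · have h4 : 3 ≤ lam.parts (d-1) - (d-1) := by
          have := haLpos (d-1) (by omega)
          omega
        have := a_mono lam hdist i (d-1) (by omega) (by omega)
        omega
    -- head entry is at most t - 2
    have hhead : s < e → lam.parts s - s + 2 ≤ t := by
      intro hlt
      rcases hs01 with ⟨h1, h2, h3⟩ | ⟨h1, h2⟩
      · have hd2 : 1 < d := by omega
        have hst := a_step lam hdist 0 (by omega)
        have hst' : lam.parts 1 - 1 + 2 ≤ lam.parts 0 - 0 := by simpa using hst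
        rw [h1]
        omega
      · have hd0 : 0 < d := by omega
        have := haL0 hd0
        have : lam.parts 0 - 0 ≠ t - 1 := fun h => h2 ⟨hd0, h⟩
        have := haL0 hd0
        rw [h1] at hlt ⊢
        omega
    -- the new diagonal data
    set m' : ℕ := e - s + 1 with hm'def
    set aF : ℕ → ℕ := fun k => if k = 0 then t else lam.parts (s + k - 1) - (s + k - 1) with haFdef
    have haF0 : aF 0 = t := by simp [haFdef]
    have haFk : ∀ k, 1 ≤ k → aF k = lam.parts (s + k - 1) - (s + k - 1) := by
      intro k hk
      rw [haFdef]
      simp only []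
      rw [if_neg (by omega)]
    have hstepF : ∀ k, k + 1 < m' → aF (k+1) + 2 ≤ aF k := by
      intro k hk
      rcases Nat.eq_zero_or_pos k with h | h
      · subst h
        rw [haF0, haFk 1 le_rfl]
        have : s < e := by omega
        have := hhead this
        simp only [Nat.add_sub_cancel]
        omega
      · rw [haFk (k+1) (by omega), haFk k (by omega)]
        have hidx : (s + k - 1) + 1 < d := by omega
        have := a_step lam hdist (s + k - 1) hidx
        have he1 : s + (k+1) - 1 = (s + k - 1) + 1 := by omega
        rw [he1]
        omega
    have hposF : ∀ k, k < m' → 1 ≤ aF k := by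
      intro k hk
      rcases Nat.eq_zero_or_pos k with h | h
      · subst h; rw [haF0]; omega
      · rw [haFk k (by omega)]
        exact haLpos (s + k - 1) (by omega)
    have hsumF : ∀ k l, k < m' → l < m' → aF k + aF l ≠ t + 1 ∧ aF k + aF l ≠ t + 2 := by
      intro k l hk hl
      rcases Nat.eq_zero_or_pos k with h0k | h0k <;> rcases Nat.eq_zero_or_pos l with h0l | h0l
      · subst h0k; subst h0l; rw [haF0]; omega
      · subst h0k
        rw [haF0, haFk l (by omega)]
        have := hmid (s + l - 1) (by omega) (by omega)
        omega
      · subst h0l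
        rw [haF0, haFk k (by omega)]
        have := hmid (s + k - 1) (by omega) (by omega)
        omega
      · rw [haFk k (by omega), haFk l (by omega)]
        exact hMDsum (s + k - 1) (s + l - 1) (by omega) (by omega)
    -- the competitor partition
    have hInDS := build_inDS m' aF hstepF hposF t ht (by omega) haF0 hsumF
    have hle := hmax _ hInDS
    have hszM := build_size m' aF hstepF hposF t (by omega) haF0
    have hszL : lam.size = ∑ i ∈ Finset.range d, (2 * lam.parts i - 2*i - 1) :=
      size_eq lam hsc
    -- rewrite the competitor size
    have hszM2 : (build m' aF hstepF hposF).size =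
        (2 * t - 1) + ∑ i ∈ Finset.Ico s e, (2 * (lam.parts i - i) - 1) := by
      rw [hszM]
      have h1 : m' = (e - s) + 1 := hm'def
      rw [h1, Finset.sum_range_succ']
      have h3 : ∑ i ∈ Finset.Ico s e, (2 * (lam.parts i - i) - 1)
          = ∑ k ∈ Finset.range (e - s), (2 * (lam.parts (s + k) - (s + k)) - 1) := by
        rw [Finset.sum_Ico_eq_sum_range]
      have h4 : ∑ k ∈ Finset.range (e - s), (2 * aF (k+1) - 1)
          = ∑ k ∈ Finset.range (e - s), (2 * (lam.parts (s + k) - (s + k)) - 1) := by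
        apply Finset.sum_congr rfl
        intro k _
        rw [haFk (k+1) (by omega)]
        have hidx : s + (k+1) - 1 = s + k := by omega
        rw [hidx]
      rw [h4, h3, haF0]
      omega
    -- rewrite lam's size
    have hszL2 : lam.size = (∑ i ∈ Finset.Ico 0 s, (2 * (lam.parts i - i) - 1)) +
        (∑ i ∈ Finset.Ico s e, (2 * (lam.parts i - i) - 1)) +
        (∑ i ∈ Finset.Ico e d, (2 * (lam.parts i - i) - 1)) := by
      rw [hszL]
      have hcg : ∑ i ∈ Finset.range d, (2 * lam.parts i - 2*i - 1) =
          ∑ i ∈ Finset.range d, (2 * (lam.parts i - i) - 1) := by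
        apply Finset.sum_congr rfl
        intro i hi
        simp only [Finset.mem_range] at hi
        have := (lam.mem_durfee_iff i).mp hi
        omega
      rw [hcg, Finset.range_eq_Ico,
        ← Finset.sum_Ico_consecutive _ (Nat.zero_le e) hse.2,
        ← Finset.sum_Ico_consecutive _ (Nat.zero_le s) hse.1]
    -- head sum value
    have hA : (∑ i ∈ Finset.Ico 0 s, (2 * (lam.parts i - i) - 1)) ≤ 2*t - 3 ∧
        (s = 0 → (∑ i ∈ Finset.Ico 0 s, (2 * (lam.parts i - i) - 1)) = 0) := by
      rcases hs01 with ⟨h1, h2, h3⟩ | ⟨h1, _⟩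
      · rw [h1]
        have : Finset.Ico 0 1 = {0} := rfl
        rw [this, Finset.sum_singleton]
        constructor
        · omega
        · intro h; omega
      · rw [h1]
        simp
    -- tail sum
    have hB : (e = d ∧ (∑ i ∈ Finset.Ico e d, (2 * (lam.parts i - i) - 1)) = 0) ∨
        (e = d - 1 ∧ s < d ∧ lam.parts (d-1) - (d-1) ≤ 2 ∧
          (∑ i ∈ Finset.Ico e d, (2 * (lam.parts i - i) - 1)) = 2 * (lam.parts (d-1) - (d-1)) - 1) := by
      rcases he01 with ⟨h1, h2, h3⟩ | ⟨h1, _⟩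
      · right
        refine ⟨h1, h2, h3, ?_⟩
        rw [h1]
        have : Finset.Ico (d-1) d = {d-1} := by
          ext x
          simp only [Finset.mem_Ico, Finset.mem_singleton]
          omega
        rw [this, Finset.sum_singleton]
      · left
        refine ⟨h1, ?_⟩
        rw [h1]
        simp
    -- derive a contradiction
    rw [hszM2] at hle
    rw [hszL2] at hle
    rcases hB with ⟨hB1, hB2⟩ | ⟨hB1, hB2, hB3, hB4⟩
    · -- no tail removed: 2t-1 ≤ A ≤ 2t-3
      omega
    · -- tail removed
      rcases hs01 with ⟨h1, h2, h3⟩ | ⟨h1, h2⟩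
      · -- s = 1 : A = 2t-3, B ∈ {1,3}; B = 3 forces sum t+1
        have hAe : (∑ i ∈ Finset.Ico 0 s, (2 * (lam.parts i - i) - 1)) = 2*(t-1) - 1 := by
          rw [h1]
          have : Finset.Ico 0 1 = {0} := rfl
          rw [this, Finset.sum_singleton, h3]
        have hBp := haLpos (d-1) (by omega)
        have hne : lam.parts (d-1) - (d-1) ≠ 2 := by
          intro hcon2
          have := (hMDsum 0 (d-1) (by omega) (by omega)).1
          omega
        omega
      · -- s = 0 : A = 0, B ≤ 3 < 2t-1
        have hA2 := hA.2 h1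
        have hBp := haLpos (d-1) (by omega)
        omega
  refine ⟨hkey, ?_, ?_, ?_⟩
  · -- 1 ∉ MD
    rintro ⟨j, hj, hkj⟩
    obtain ⟨i, hi, hki⟩ := hkey
    have hij : i ≠ j := by intro h; subst h; omega
    obtain ⟨hc, hk⟩ := offdiag_hook lam hsc hi hj
    have hdi := (diag_hook lam hsc hi).2
    have hdj := (diag_hook lam hsc hj).2
    have heq : lam.hook i j = t := by omega
    exact hct i j hc (heq ▸ dvd_refl t)
  · -- 3 ∉ MD
    rintro ⟨j, hj, hkj⟩
    obtain ⟨i, hi, hki⟩ := hkey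
    have hij : i ≠ j := by intro h; subst h; omega
    obtain ⟨hc, hk⟩ := offdiag_hook lam hsc hi hj
    have hdi := (diag_hook lam hsc hi).2
    have hdj := (diag_hook lam hsc hj).2
    have heq : lam.hook i j = t + 1 := by omega
    exact hct1 i j hc (heq ▸ dvd_refl (t+1))
  · -- 2t-3 ∉ MD
    rintro ⟨j, hj, hkj⟩
    obtain ⟨i, hi, hki⟩ := hkey
    have hij : i ≠ j := by intro h; subst h; omega
    have hdi := (diag_hook lam hsc hi).2
    have hdj := (diag_hook lam hsc hj).2
    have hpi := (lam.mem_durfee_iff i).mp hi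
    have hpj := (lam.mem_durfee_iff j).mp hj
    rcases Nat.lt_or_ge i j with h | h
    · have := a_mono lam hdist i j (by omega) hj
      omega
    · have := a_mono lam hdist j i (by omega) hi
      omega
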